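/- For a random angle θ with an even probability distribution, the averaged conjugation of a density matrix ρ by the Z-rotation R_Z(θ) = e^{-iθZ/2} equals the convex combination ((1+r₁)/2)·ρ + ((1-r₁)/2)·ZρZ, where r₁ = E[cos θ]. -/

import Mathlib

open MeasureTheory Matrix

noncomputable def RZ (θ : ℝ) : Matrix (Fin 2) (Fin 2) ℂ :=
  !![Complex.exp (-(Complex.I * θ / 2)), 0; 0, Complex.exp (Complex.I * θ / 2)]

noncomputable def Zg : Matrix (Fin 2) (Fin 2) ℂ := !![1, 0; 0, -1]

lemma e00 (θ : ℝ) (ρ : Matrix (Fin 2) (Fin 2) ℂ) :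
    (RZ θ * ρ * (RZ θ)ᴴ) 0 0 = ρ 0 0 := by
  simp [RZ, Matrix.mul_apply, Matrix.vecMul, dotProduct, Fin.sum_univ_succ,
    ← Complex.exp_conj, ← Complex.exp_add, map_ofNat]
  rw [mul_right_comm, ← Complex.exp_add]; ring_nf
  simp

lemma e11 (θ : ℝ) (ρ : Matrix (Fin 2) (Fin 2) ℂ) :
    (RZ θ * ρ * (RZ θ)ᴴ) 1 1 = ρ 1 1 := by
  simp [RZ, Matrix.mul_apply, Matrix.vecMul, dotProduct, Fin.sum_univ_succ,
    ← Complex.exp_conj, ← Complex.exp_add, map_ofNat]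
  rw [mul_right_comm, ← Complex.exp_add]; ring_nf
  simp

lemma e01 (θ : ℝ) (ρ : Matrix (Fin 2) (Fin 2) ℂ) :
    (RZ θ * ρ * (RZ θ)ᴴ) 0 1 = Complex.exp (-(Complex.I * θ)) * ρ 0 1 := by
  simp [RZ, Matrix.mul_apply, Matrix.vecMul, dotProduct, Fin.sum_univ_succ,
    ← Complex.exp_conj, ← Complex.exp_add, map_ofNat]
  rw [mul_right_comm, ← Complex.exp_add]; ring_nf

lemma e10 (θ : ℝ) (ρ : Matrix (Fin 2) (Fin 2) ℂ) :
    (RZ θ * ρ * (RZ θ)ᴴ) 1 0 = Complex.exp (Complex.I * θ) * ρ 1 0 := by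
  simp [RZ, Matrix.mul_apply, Matrix.vecMul, dotProduct, Fin.sum_univ_succ,
    ← Complex.exp_conj, ← Complex.exp_add, map_ofNat]
  rw [mul_right_comm, ← Complex.exp_add]; ring_nf

lemma sin_int_zero (μ : Measure ℝ) [IsProbabilityMeasure μ]
    (hsym : μ.map (fun θ => -θ) = μ) : ∫ θ, Real.sin θ ∂μ = 0 := by
  have h : ∫ θ, Real.sin θ ∂μ = ∫ θ, Real.sin (-θ) ∂μ := by
    conv_lhs => rw [← hsym]
    rw [integral_map measurable_neg.aemeasurable
      Real.continuous_sin.aestronglyMeasurable]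
  simp only [Real.sin_neg, integral_neg] at h
  linarith

lemma sin_integrable (μ : Measure ℝ) [IsProbabilityMeasure μ] :
    Integrable (fun θ : ℝ => Real.sin θ) μ := by
  apply Integrable.mono' (integrable_const 1) Real.continuous_sin.aestronglyMeasurable
  filter_upwards with x
  simpa using Real.abs_sin_le_one x

lemma exp_int (μ : Measure ℝ) [IsProbabilityMeasure μ]
    (hs0 : ∫ θ, Real.sin θ ∂μ = 0)
    (hc : Integrable (fun θ : ℝ => Real.cos θ) μ)
    (hs : Integrable (fun θ : ℝ => Real.sin θ) μ) :
    ∫ θ, Complex.exp (Complex.I * θ) ∂μ = ((∫ θ, Real.cos θ ∂μ : ℝ) : ℂ) := by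
  have heq : (fun θ : ℝ => Complex.exp (Complex.I * θ))
      = fun θ : ℝ => (Real.cos θ : ℂ) + (Real.sin θ : ℂ) * Complex.I := by
    funext θ; rw [mul_comm, Complex.exp_mul_I]; simp
  have h1 : ∫ θ, ((Real.cos θ : ℂ) + (Real.sin θ : ℂ) * Complex.I) ∂μ
      = (∫ θ, ((Real.cos θ : ℂ)) ∂μ) + ∫ θ, ((Real.sin θ : ℂ) * Complex.I) ∂μ :=
    integral_add hc.ofReal (hs.ofReal.mul_const Complex.I)
  have h2 : ∫ θ, ((Real.sin θ : ℂ) * Complex.I) ∂μ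
      = (∫ θ, ((Real.sin θ : ℂ)) ∂μ) * Complex.I := integral_mul_const _ _
  have h3 : ∫ θ, ((Real.cos θ : ℂ)) ∂μ = ((∫ θ, Real.cos θ ∂μ : ℝ) : ℂ) := integral_ofReal
  have h4 : ∫ θ, ((Real.sin θ : ℂ)) ∂μ = ((∫ θ, Real.sin θ ∂μ : ℝ) : ℂ) := integral_ofReal
  rw [heq, h1, h2, h3, h4, hs0]
  simp

lemma exp_int' (μ : Measure ℝ) [IsProbabilityMeasure μ]
    (hs0 : ∫ θ, Real.sin θ ∂μ = 0)
    (hc : Integrable (fun θ : ℝ => Real.cos θ) μ)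
    (hs : Integrable (fun θ : ℝ => Real.sin θ) μ) :
    ∫ θ, Complex.exp (-(Complex.I * θ)) ∂μ = ((∫ θ, Real.cos θ ∂μ : ℝ) : ℂ) := by
  have heq : (fun θ : ℝ => Complex.exp (-(Complex.I * θ)))
      = fun θ : ℝ => (Real.cos θ : ℂ) + ((-Real.sin θ : ℝ) : ℂ) * Complex.I := by
    funext θ
    rw [show -(Complex.I * θ) = (-θ : ℝ) * Complex.I by push_cast; ring, Complex.exp_mul_I]
    push_cast
    simp [Real.cos_neg, Real.sin_neg]
  have hs' : Integrable (fun θ : ℝ => -Real.sin θ) μ := hs.neg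
  have h1 : ∫ θ, ((Real.cos θ : ℂ) + ((-Real.sin θ : ℝ) : ℂ) * Complex.I) ∂μ
      = (∫ θ, ((Real.cos θ : ℂ)) ∂μ) + ∫ θ, (((-Real.sin θ : ℝ) : ℂ) * Complex.I) ∂μ :=
    integral_add hc.ofReal (hs'.ofReal.mul_const Complex.I)
  have h2 : ∫ θ, (((-Real.sin θ : ℝ) : ℂ) * Complex.I) ∂μ
      = (∫ θ, (((-Real.sin θ : ℝ) : ℂ)) ∂μ) * Complex.I := integral_mul_const _ _
  have h3 : ∫ θ, ((Real.cos θ : ℂ)) ∂μ = ((∫ θ, Real.cos θ ∂μ : ℝ) : ℂ) := integral_ofReal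
  have h4 : ∫ θ, (((-Real.sin θ : ℝ) : ℂ)) ∂μ = ((∫ θ, -Real.sin θ ∂μ : ℝ) : ℂ) := integral_ofReal
  rw [heq, h1, h2, h3, h4, integral_neg, hs0]
  simp

/-- for an even distribution of θ, the averaged conjugation by `R_Z(θ)` is
`((1+r₁)/2) ρ + ((1-r₁)/2) Z ρ Z` with `r₁ = E[cos θ]` (stated entrywise). -/
theorem stmt0 (μ : Measure ℝ) [IsProbabilityMeasure μ]
    (hsym : μ.map (fun θ => -θ) = μ)
    (ρ : Matrix (Fin 2) (Fin 2) ℂ)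
    (hcos : Integrable (fun θ => Real.cos θ) μ)
    (hint : ∀ i j, Integrable (fun θ => (RZ θ * ρ * (RZ θ)ᴴ) i j) μ) :
    ∀ i j, (∫ θ, (RZ θ * ρ * (RZ θ)ᴴ) i j ∂μ)
      = ((((1 + ∫ θ, Real.cos θ ∂μ) / 2 : ℝ) : ℂ) • ρ
        + (((1 - ∫ θ, Real.cos θ ∂μ) / 2 : ℝ) : ℂ) • (Zg * ρ * Zg)) i j := by
  have hs0 := sin_int_zero μ hsym
  have hs := sin_integrable μ
  have hplus := exp_int μ hs0 hcos hs
  have hminus := exp_int' μ hs0 hcos hs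
  set r := ∫ θ, Real.cos θ ∂μ with hr
  intro i j
  fin_cases i <;> fin_cases j <;>
    simp only [e00, e01, e10, e11, Fin.zero_eta, Fin.mk_one, Matrix.add_apply,
      Matrix.smul_apply, smul_eq_mul]
  · rw [integral_const]
    have : (Zg * ρ * Zg) 0 0 = ρ 0 0 := by
      simp [Zg, Matrix.mul_apply, Matrix.vecMul, dotProduct, Fin.sum_univ_succ]
    rw [this]
    simp only [probReal_univ, one_smul]
    push_cast
    ring
  · rw [integral_mul_const, hminus]
    have : (Zg * ρ * Zg) 0 1 = -ρ 0 1 := by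
      simp [Zg, Matrix.mul_apply, Matrix.vecMul, dotProduct, Fin.sum_univ_succ]
    rw [this]
    push_cast
    ring
  · rw [integral_mul_const, hplus]
    have : (Zg * ρ * Zg) 1 0 = -ρ 1 0 := by
      simp [Zg, Matrix.mul_apply, Matrix.vecMul, dotProduct, Fin.sum_univ_succ]
    rw [this]
    push_cast
    ring
  · rw [integral_const]
    have : (Zg * ρ * Zg) 1 1 = ρ 1 1 := by
      simp [Zg, Matrix.mul_apply, Matrix.vecMul, dotProduct, Fin.sum_univ_succ]
    rw [this]
    simp only [probReal_univ, one_smul]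
    push_cast
    ring
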